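/- The complete elliptic integral of the first kind K satisfies the ODE x(x²−1)K″(x) + (3x²−1)K′(x) + x·K(x) = 0 for 0 < x < 1. -/

import Mathlib

open MeasureTheory Set intervalIntegral Real

noncomputable def ellipticK (k : ℝ) : ℝ :=
  ∫ t in (0:ℝ)..1, 1 / Real.sqrt ((1 - t^2) * (1 - k^2 * t^2))

noncomputable def eg (k t : ℝ) : ℝ := 1 / Real.sqrt ((1 - t^2) * (1 - k^2 * t^2))
noncomputable def eg1 (k t : ℝ) : ℝ :=
  k * t^2 / (Real.sqrt (1 - t^2) * Real.sqrt (1 - k^2*t^2)^3)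
noncomputable def eg2 (k t : ℝ) : ℝ :=
  t^2 / (Real.sqrt (1 - t^2) * Real.sqrt (1 - k^2*t^2)^3)
    + 3*k^2*t^4 / (Real.sqrt (1 - t^2) * Real.sqrt (1 - k^2*t^2)^5)

lemma integrable_base : IntegrableOn (fun t => (Real.sqrt (1 - t^2))⁻¹) (Set.Ioc (0:ℝ) 1) := by
  have h0 : IntervalIntegrable (fun s : ℝ => s ^ (-(1/2) : ℝ)) volume 0 1 :=
    intervalIntegral.intervalIntegrable_rpow' (by norm_num)
  have h1 : IntervalIntegrable (fun t : ℝ => (1 - t) ^ (-(1/2) : ℝ)) volume 0 1 := by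
    have := h0.comp_sub_left 1
    simpa using this.symm
  have h2 : IntegrableOn (fun t : ℝ => (1 - t) ^ (-(1/2) : ℝ)) (Set.Ioc (0:ℝ) 1) := by
    rw [← intervalIntegrable_iff_integrableOn_Ioc_of_le (by norm_num : (0:ℝ) ≤ 1)]
    exact h1
  refine h2.mono' ?_ ?_
  · exact (((measurable_const.sub (measurable_id.pow_const 2)).sqrt).inv).aestronglyMeasurable
  · filter_upwards [ae_restrict_mem measurableSet_Ioc] with t ht
    have ht0 : 0 < t := ht.1
    have ht1 : t ≤ 1 := ht.2
    have hle : 1 - t ≤ 1 - t^2 := by nlinarith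
    have h1t : (0:ℝ) ≤ 1 - t := by linarith
    rw [Real.norm_eq_abs, abs_inv, abs_of_nonneg (Real.sqrt_nonneg _)]
    rw [Real.rpow_neg h1t, ← Real.sqrt_eq_rpow]
    rcases eq_or_lt_of_le ht1 with h | h
    · subst h; norm_num
    · exact inv_anti₀ (Real.sqrt_pos.2 (by linarith)) (Real.sqrt_le_sqrt hle)

lemma integrableOn_of_bound {f : ℝ → ℝ}
    (hm : AEStronglyMeasurable f (volume.restrict (Set.Ioc 0 1))) {C : ℝ}
    (h : ∀ t ∈ Set.Ioc (0:ℝ) 1, ‖f t‖ ≤ C * (Real.sqrt (1 - t^2))⁻¹) :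
    IntegrableOn f (Set.Ioc (0:ℝ) 1) := by
  refine (integrable_base.const_mul C).mono' hm ?_
  filter_upwards [ae_restrict_mem measurableSet_Ioc] with t ht
  exact h t ht

lemma hasDerivAt_sqrt2 {t k : ℝ} (h2 : (0:ℝ) < 1 - k^2*t^2) :
    HasDerivAt (fun k : ℝ => Real.sqrt (1 - k^2*t^2))
      (-(2*k*t^2) / (2 * Real.sqrt (1 - k^2*t^2))) k := by
  have hu : HasDerivAt (fun k : ℝ => 1 - k^2*t^2) (-(2*k*t^2)) k := by
    have := ((hasDerivAt_pow 2 k).mul_const (t^2)).const_sub 1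
    refine this.congr_deriv ?_
    ring
  exact hu.sqrt (by positivity)

lemma hasDerivAt_eg {t : ℝ} (ht0 : 0 < t) (ht1 : t < 1) {k : ℝ} (hk : k^2*t^2 < 1) :
    HasDerivAt (fun k => eg k t) (eg1 k t) k := by
  have h1 : (0:ℝ) < 1 - t^2 := by nlinarith
  have h2 : (0:ℝ) < 1 - k^2*t^2 := by linarith
  have hs1 : 0 < Real.sqrt (1 - t^2) := Real.sqrt_pos.2 h1
  have hs2 : 0 < Real.sqrt (1 - k^2*t^2) := Real.sqrt_pos.2 h2
  have heq : (fun k => eg k t)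
      = fun k => 1 / (Real.sqrt (1 - t^2) * Real.sqrt (1 - k^2*t^2)) := by
    funext k
    rw [eg, Real.sqrt_mul h1.le]
  rw [heq]
  have hprod : HasDerivAt (fun k : ℝ => Real.sqrt (1 - t^2) * Real.sqrt (1 - k^2*t^2))
      (Real.sqrt (1 - t^2) * (-(2*k*t^2) / (2 * Real.sqrt (1 - k^2*t^2)))) k :=
    (hasDerivAt_sqrt2 h2).const_mul _
  have hd := (hasDerivAt_const k (1:ℝ)).div hprod (by positivity)
  refine hd.congr_deriv ?_
  rw [eg1]
  field_simp
  ring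

lemma hasDerivAt_eg1 {t : ℝ} (ht0 : 0 < t) (ht1 : t < 1) {k : ℝ} (hk : k^2*t^2 < 1) :
    HasDerivAt (fun k => eg1 k t) (eg2 k t) k := by
  have h1 : (0:ℝ) < 1 - t^2 := by nlinarith
  have h2 : (0:ℝ) < 1 - k^2*t^2 := by linarith
  have hs1 : 0 < Real.sqrt (1 - t^2) := Real.sqrt_pos.2 h1
  have hs2 : 0 < Real.sqrt (1 - k^2*t^2) := Real.sqrt_pos.2 h2
  have hnum : HasDerivAt (fun k : ℝ => k * t^2) (t^2) k := by
    simpa using (hasDerivAt_id k).mul_const (t^2)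
  have hden : HasDerivAt (fun k : ℝ => Real.sqrt (1 - t^2) * Real.sqrt (1 - k^2*t^2)^3)
      (Real.sqrt (1 - t^2) * (3 * Real.sqrt (1 - k^2*t^2)^2
        * (-(2*k*t^2) / (2 * Real.sqrt (1 - k^2*t^2))))) k := by
    have := ((hasDerivAt_sqrt2 h2).pow 3).const_mul (Real.sqrt (1 - t^2))
    refine this.congr_deriv ?_
    try ring
  have hd := hnum.div hden (by positivity)
  refine hd.congr_deriv ?_
  rw [eg2]
  have hb : Real.sqrt (1 - k^2*t^2)^2 = 1 - k^2*t^2 := Real.sq_sqrt h2.le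
  field_simp
  ring

noncomputable def eh (k t : ℝ) : ℝ := k * t * Real.sqrt (1 - t^2) / Real.sqrt (1 - k^2*t^2)^3
noncomputable def eL (k t : ℝ) : ℝ := k*(k^2-1) * eg2 k t + (3*k^2-1) * eg1 k t + k * eg k t

lemma hasDerivAt_eh {k : ℝ} (hk0 : 0 < k) (hk1 : k < 1) {t : ℝ} (ht0 : 0 < t) (ht1 : t < 1) :
    HasDerivAt (fun t => eh k t) (eL k t) t := by
  have h1 : (0:ℝ) < 1 - t^2 := by nlinarith
  have h2 : (0:ℝ) < 1 - k^2*t^2 := by nlinarith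
  have hs1 : 0 < Real.sqrt (1 - t^2) := Real.sqrt_pos.2 h1
  have hs2 : 0 < Real.sqrt (1 - k^2*t^2) := Real.sqrt_pos.2 h2
  have hsq1 : HasDerivAt (fun t : ℝ => Real.sqrt (1 - t^2))
      (-(2*t) / (2 * Real.sqrt (1 - t^2))) t := by
    have hu : HasDerivAt (fun t : ℝ => 1 - t^2) (-(2*t)) t := by
      have := (hasDerivAt_pow 2 t).const_sub 1
      refine this.congr_deriv ?_
      simp
    exact hu.sqrt (by positivity)
  have hsq2 : HasDerivAt (fun t : ℝ => Real.sqrt (1 - k^2*t^2))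
      (-(2*k^2*t) / (2 * Real.sqrt (1 - k^2*t^2))) t := by
    have hu : HasDerivAt (fun t : ℝ => 1 - k^2*t^2) (-(2*k^2*t)) t := by
      have := ((hasDerivAt_pow 2 t).const_mul (k^2)).const_sub 1
      refine this.congr_deriv ?_
      ring
    exact hu.sqrt (by positivity)
  have hN : HasDerivAt (fun t : ℝ => k * t * Real.sqrt (1 - t^2))
      (k * Real.sqrt (1 - t^2) + k * t * (-(2*t) / (2 * Real.sqrt (1 - t^2)))) t := by
    have ha : HasDerivAt (fun t : ℝ => k * t) k t := by
      simpa using (hasDerivAt_id t).const_mul k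
    exact ha.mul hsq1
  have hD : HasDerivAt (fun t : ℝ => Real.sqrt (1 - k^2*t^2)^3)
      (3 * Real.sqrt (1 - k^2*t^2)^2 * (-(2*k^2*t) / (2 * Real.sqrt (1 - k^2*t^2)))) t := by
    have := hsq2.pow 3
    refine this.congr_deriv ?_
    try ring
  have hd := hN.div hD (by positivity)
  refine hd.congr_deriv ?_
  have ha : Real.sqrt (1 - t^2)^2 = 1 - t^2 := Real.sq_sqrt h1.le
  have hb : Real.sqrt (1 - k^2*t^2)^2 = 1 - k^2*t^2 := Real.sq_sqrt h2.le
  rw [eL, eg, eg1, eg2, Real.sqrt_mul h1.le]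
  have pa4 : Real.sqrt (1-t^2)^4 = (1-t^2)^2 := by
    rw [(by ring : Real.sqrt (1-t^2)^4 = (Real.sqrt (1-t^2)^2)^2), ha]
  have pa6 : Real.sqrt (1-t^2)^6 = (1-t^2)^3 := by
    rw [(by ring : Real.sqrt (1-t^2)^6 = (Real.sqrt (1-t^2)^2)^3), ha]
  have pb12 : Real.sqrt (1-k^2*t^2)^12 = (1-k^2*t^2)^6 := by
    rw [(by ring : Real.sqrt (1-k^2*t^2)^12 = (Real.sqrt (1-k^2*t^2)^2)^6), hb]
  have pb14 : Real.sqrt (1-k^2*t^2)^14 = (1-k^2*t^2)^7 := by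
    rw [(by ring : Real.sqrt (1-k^2*t^2)^14 = (Real.sqrt (1-k^2*t^2)^2)^7), hb]
  have pb16 : Real.sqrt (1-k^2*t^2)^16 = (1-k^2*t^2)^8 := by
    rw [(by ring : Real.sqrt (1-k^2*t^2)^16 = (Real.sqrt (1-k^2*t^2)^2)^8), hb]
  have pb18 : Real.sqrt (1-k^2*t^2)^18 = (1-k^2*t^2)^9 := by
    rw [(by ring : Real.sqrt (1-k^2*t^2)^18 = (Real.sqrt (1-k^2*t^2)^2)^9), hb]
  field_simp
  ring_nf
  have hb' : Real.sqrt (1-t^2*k^2)^2 = 1-t^2*k^2 := by rw [mul_comm (t^2)]; exact hb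
  rw [(by ring : Real.sqrt (1-t^2*k^2)^4 = (Real.sqrt (1-t^2*k^2)^2)^2), hb', ha]
  ring

lemma sqrt_b_le {b k t : ℝ} (hk : |k| ≤ b) (ht0 : 0 < t) (ht1 : t ≤ 1) :
    Real.sqrt (1-b^2) ≤ Real.sqrt (1-k^2*t^2) := by
  apply Real.sqrt_le_sqrt
  have hk2 : k^2 ≤ b^2 := by
    have := pow_le_pow_left₀ (abs_nonneg k) hk 2
    simpa [sq_abs] using this
  have ht2 : t^2 ≤ 1 := by nlinarith
  nlinarith [mul_le_mul_of_nonneg_left ht2 (sq_nonneg k)]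

lemma norm_eg_le {b : ℝ} (hb0 : 0 ≤ b) (hb1 : b < 1) {k : ℝ} (hk : |k| ≤ b) {t : ℝ}
    (ht : t ∈ Set.Ioc (0:ℝ) 1) :
    ‖eg k t‖ ≤ (Real.sqrt (1-b^2))⁻¹ * (Real.sqrt (1-t^2))⁻¹ := by
  have hbb : (0:ℝ) < 1 - b^2 := by nlinarith
  have hsb : 0 < Real.sqrt (1-b^2) := Real.sqrt_pos.2 hbb
  rcases eq_or_lt_of_le ht.2 with h|h
  · subst h
    norm_num [eg]
  · have h1 : (0:ℝ) < 1 - t^2 := by nlinarith [ht.1]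
    have hs1 : 0 < Real.sqrt (1-t^2) := Real.sqrt_pos.2 h1
    have hs2b := sqrt_b_le hk ht.1 ht.2
    have hs2 : 0 < Real.sqrt (1-k^2*t^2) := lt_of_lt_of_le hsb hs2b
    rw [eg, Real.sqrt_mul h1.le]
    rw [Real.norm_eq_abs, abs_div, abs_one, abs_of_nonneg (by positivity)]
    rw [← mul_inv, one_div]
    apply inv_anti₀ (by positivity)
    rw [mul_comm]
    exact mul_le_mul_of_nonneg_left hs2b hs1.le

lemma norm_eg1_le {b : ℝ} (hb0 : 0 ≤ b) (hb1 : b < 1) {k : ℝ} (hk : |k| ≤ b) {t : ℝ}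
    (ht : t ∈ Set.Ioc (0:ℝ) 1) :
    ‖eg1 k t‖ ≤ ((Real.sqrt (1-b^2))^3)⁻¹ * (Real.sqrt (1-t^2))⁻¹ := by
  have hbb : (0:ℝ) < 1 - b^2 := by nlinarith
  have hsb : 0 < Real.sqrt (1-b^2) := Real.sqrt_pos.2 hbb
  rcases eq_or_lt_of_le ht.2 with h|h
  · subst h
    norm_num [eg1]
  · have h1 : (0:ℝ) < 1 - t^2 := by nlinarith [ht.1]
    have hs1 : 0 < Real.sqrt (1-t^2) := Real.sqrt_pos.2 h1
    have hs2b := sqrt_b_le hk ht.1 ht.2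
    have hs2 : 0 < Real.sqrt (1-k^2*t^2) := lt_of_lt_of_le hsb hs2b
    have hnum : |k * t^2| ≤ 1 := by
      rw [abs_mul, abs_of_nonneg (sq_nonneg t)]
      have h2 : t^2 ≤ 1 := by nlinarith [ht.1]
      calc |k| * t^2 ≤ 1 * 1 := by
            apply mul_le_mul (le_trans hk hb1.le) h2 (sq_nonneg t) zero_le_one
        _ = 1 := by norm_num
    rw [eg1, Real.norm_eq_abs, abs_div, abs_of_nonneg (by positivity : (0:ℝ) ≤ Real.sqrt (1-t^2) * Real.sqrt (1-k^2*t^2)^3)]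
    calc |k * t^2| / (Real.sqrt (1-t^2) * Real.sqrt (1-k^2*t^2)^3)
        ≤ 1 / (Real.sqrt (1-t^2) * Real.sqrt (1-b^2)^3) := by
          apply div_le_div₀ zero_le_one hnum (by positivity)
          exact mul_le_mul_of_nonneg_left (pow_le_pow_left₀ hsb.le hs2b 3) hs1.le
      _ = ((Real.sqrt (1-b^2))^3)⁻¹ * (Real.sqrt (1-t^2))⁻¹ := by
          rw [one_div, mul_inv, mul_comm]

lemma norm_eg2_le {b : ℝ} (hb0 : 0 ≤ b) (hb1 : b < 1) {k : ℝ} (hk : |k| ≤ b) {t : ℝ}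
    (ht : t ∈ Set.Ioc (0:ℝ) 1) :
    ‖eg2 k t‖ ≤ 4 * ((Real.sqrt (1-b^2))^5)⁻¹ * (Real.sqrt (1-t^2))⁻¹ := by
  have hbb : (0:ℝ) < 1 - b^2 := by nlinarith
  have hsb : 0 < Real.sqrt (1-b^2) := Real.sqrt_pos.2 hbb
  rcases eq_or_lt_of_le ht.2 with h|h
  · subst h
    norm_num [eg2]
  · have h1 : (0:ℝ) < 1 - t^2 := by nlinarith [ht.1]
    have hs1 : 0 < Real.sqrt (1-t^2) := Real.sqrt_pos.2 h1
    have hs2b := sqrt_b_le hk ht.1 ht.2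
    have hs2 : 0 < Real.sqrt (1-k^2*t^2) := lt_of_lt_of_le hsb hs2b
    have ht2 : t^2 ≤ 1 := by nlinarith [ht.1]
    have hk2 : k^2 ≤ 1 := by
      have := pow_le_pow_left₀ (abs_nonneg k) (le_trans hk hb1.le) 2
      simpa [sq_abs] using this
    have hb5le3 : Real.sqrt (1-b^2)^5 ≤ Real.sqrt (1-b^2)^3 := by
      apply pow_le_pow_of_le_one hsb.le (Real.sqrt_le_one.mpr (by nlinarith)) (by norm_num)
    rw [eg2]
    refine le_trans (norm_add_le _ _) ?_
    have e1 : ‖t^2 / (Real.sqrt (1-t^2) * Real.sqrt (1-k^2*t^2)^3)‖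
        ≤ ((Real.sqrt (1-b^2))^5)⁻¹ * (Real.sqrt (1-t^2))⁻¹ := by
      rw [Real.norm_eq_abs, abs_div, abs_of_nonneg (sq_nonneg t),
        abs_of_nonneg (by positivity : (0:ℝ) ≤ Real.sqrt (1-t^2) * Real.sqrt (1-k^2*t^2)^3)]
      calc t^2 / (Real.sqrt (1-t^2) * Real.sqrt (1-k^2*t^2)^3)
          ≤ 1 / (Real.sqrt (1-t^2) * Real.sqrt (1-b^2)^5) := by
            apply div_le_div₀ zero_le_one ht2 (by positivity)
            apply mul_le_mul_of_nonneg_left _ hs1.le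
            exact le_trans hb5le3 (pow_le_pow_left₀ hsb.le hs2b 3)
        _ = ((Real.sqrt (1-b^2))^5)⁻¹ * (Real.sqrt (1-t^2))⁻¹ := by
            rw [one_div, mul_inv, mul_comm]
    have e2 : ‖3*k^2*t^4 / (Real.sqrt (1-t^2) * Real.sqrt (1-k^2*t^2)^5)‖
        ≤ 3 * (((Real.sqrt (1-b^2))^5)⁻¹ * (Real.sqrt (1-t^2))⁻¹) := by
      have hnum : |3*k^2*t^4| ≤ 3 := by
        rw [abs_of_nonneg (by positivity)]
        nlinarith [sq_nonneg t, sq_nonneg k, sq_nonneg (t^2)]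
      rw [Real.norm_eq_abs, abs_div,
        abs_of_nonneg (by positivity : (0:ℝ) ≤ Real.sqrt (1-t^2) * Real.sqrt (1-k^2*t^2)^5)]
      calc |3*k^2*t^4| / (Real.sqrt (1-t^2) * Real.sqrt (1-k^2*t^2)^5)
          ≤ 3 / (Real.sqrt (1-t^2) * Real.sqrt (1-b^2)^5) := by
            apply div_le_div₀ (by norm_num) hnum (by positivity)
            exact mul_le_mul_of_nonneg_left (pow_le_pow_left₀ hsb.le hs2b 5) hs1.le
        _ = 3 * (((Real.sqrt (1-b^2))^5)⁻¹ * (Real.sqrt (1-t^2))⁻¹) := by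
            rw [div_eq_mul_inv, mul_inv]
            ring
    calc _ ≤ ((Real.sqrt (1-b^2))^5)⁻¹ * (Real.sqrt (1-t^2))⁻¹
            + 3 * (((Real.sqrt (1-b^2))^5)⁻¹ * (Real.sqrt (1-t^2))⁻¹) := add_le_add e1 e2
      _ = 4 * ((Real.sqrt (1-b^2))^5)⁻¹ * (Real.sqrt (1-t^2))⁻¹ := by ring

lemma meas_aux1 : Measurable fun t : ℝ => 1 - t^2 :=
  (measurable_id.pow_const 2).const_sub 1

lemma meas_aux2 (k : ℝ) : Measurable fun t : ℝ => 1 - k^2*t^2 :=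
  ((measurable_id.pow_const 2).const_mul (k^2)).const_sub 1

lemma meas_eg (k : ℝ) : Measurable (eg k) :=
  measurable_const.div ((meas_aux1.mul (meas_aux2 k)).sqrt)

lemma meas_eg1 (k : ℝ) : Measurable (eg1 k) :=
  ((measurable_id.pow_const 2).const_mul k).div
    (meas_aux1.sqrt.mul
      ((meas_aux2 k).sqrt.pow_const 3))

lemma meas_eg2 (k : ℝ) : Measurable (eg2 k) :=
  ((measurable_id.pow_const 2).div
      (meas_aux1.sqrt.mul
        ((meas_aux2 k).sqrt.pow_const 3))).add
    (((measurable_id.pow_const 4).const_mul (3*k^2)).div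
      (meas_aux1.sqrt.mul
        ((meas_aux2 k).sqrt.pow_const 5)))

lemma ae_ne_one : ∀ᵐ t : ℝ, t ≠ (1:ℝ) := by
  rw [MeasureTheory.ae_iff]
  simp only [not_not, Set.setOf_eq_eq_singleton]
  exact Real.volume_singleton

lemma abs_le_of_ball {x k : ℝ} (hx0 : 0 < x) (hx1 : x < 1)
    (hk : k ∈ Metric.ball x ((1-x)/2)) : |k| ≤ (1+x)/2 := by
  rw [Metric.mem_ball, Real.dist_eq] at hk
  rw [abs_le]
  cases' abs_lt.1 hk with h1 h2
  constructor <;> linarith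

lemma deriv_step {x : ℝ} (hx0 : 0 < x) (hx1 : x < 1) (F F' : ℝ → ℝ → ℝ)
    (mF : ∀ k, Measurable (F k)) (mF' : ∀ k, Measurable (F' k)) (C C' : ℝ)
    (hbF : ∀ (k : ℝ), |k| ≤ (1+x)/2 → ∀ t ∈ Set.Ioc (0:ℝ) 1,
      ‖F k t‖ ≤ C * (Real.sqrt (1-t^2))⁻¹)
    (hbF' : ∀ (k : ℝ), |k| ≤ (1+x)/2 → ∀ t ∈ Set.Ioc (0:ℝ) 1,
      ‖F' k t‖ ≤ C' * (Real.sqrt (1-t^2))⁻¹)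
    (hdiff : ∀ t ∈ Set.Ioo (0:ℝ) 1, ∀ (k : ℝ), |k| ≤ (1+x)/2 →
      HasDerivAt (fun k => F k t) (F' k t) k) :
    IntervalIntegrable (F' x) MeasureTheory.volume 0 1 ∧
      HasDerivAt (fun k => ∫ t in (0:ℝ)..1, F k t) (∫ t in (0:ℝ)..1, F' x t) x := by
  have hxb : |x| ≤ (1+x)/2 := by rw [abs_of_pos hx0]; linarith
  have hu : Set.uIoc (0:ℝ) 1 = Set.Ioc 0 1 := Set.uIoc_of_le (by norm_num)
  have hεpos : 0 < (1-x)/2 := by linarith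
  refine intervalIntegral.hasDerivAt_integral_of_dominated_loc_of_deriv_le
    (F := F) (F' := F') (bound := fun t => |C'| * (Real.sqrt (1-t^2))⁻¹) (Metric.ball_mem_nhds x hεpos) ?_ ?_ ?_ ?_ ?_ ?_
  · exact Filter.Eventually.of_forall fun k => ((mF k).aestronglyMeasurable)
  · rw [intervalIntegrable_iff_integrableOn_Ioc_of_le (by norm_num)]
    exact integrableOn_of_bound (mF x).aestronglyMeasurable (hbF x hxb)
  · exact (mF' x).aestronglyMeasurable
  · filter_upwards [ae_ne_one] with t htne ht k hk
    rw [hu] at ht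
    refine le_trans (hbF' k (abs_le_of_ball hx0 hx1 hk) t ht) ?_
    gcongr
    exact le_abs_self C'
  · rw [intervalIntegrable_iff_integrableOn_Ioc_of_le (by norm_num)]
    exact (integrable_base.const_mul (|C'|)).mono'
      (meas_aux1.sqrt.inv.const_mul |C'|).aestronglyMeasurable
      (Filter.Eventually.of_forall fun t => by
        rw [Real.norm_eq_abs, abs_mul, abs_abs, abs_inv, abs_of_nonneg (Real.sqrt_nonneg _)])
  · filter_upwards [ae_ne_one] with t htne ht k hk
    rw [hu] at ht
    exact hdiff t ⟨ht.1, lt_of_le_of_ne ht.2 htne⟩ k (abs_le_of_ball hx0 hx1 hk)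

lemma meas_eL (k : ℝ) : Measurable (eL k) := by
  unfold eL
  exact (((meas_eg2 k).const_mul _).add ((meas_eg1 k).const_mul _)).add
    ((meas_eg k).const_mul _)

lemma intervalIntegrable_eL {x : ℝ} (hx0 : 0 < x) (hx1 : x < 1) :
    IntervalIntegrable (eL x) MeasureTheory.volume 0 1 := by
  have hxx : |x| ≤ x := by rw [abs_of_pos hx0]
  rw [intervalIntegrable_iff_integrableOn_Ioc_of_le (by norm_num)]
  refine integrableOn_of_bound (meas_eL x).aestronglyMeasurable
    (C := |x*(x^2-1)| * (4 * ((Real.sqrt (1-x^2))^5)⁻¹)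
      + |3*x^2-1| * ((Real.sqrt (1-x^2))^3)⁻¹ + |x| * (Real.sqrt (1-x^2))⁻¹) ?_
  intro t ht
  have h2 := norm_eg2_le hx0.le hx1 hxx ht
  have h1 := norm_eg1_le hx0.le hx1 hxx ht
  have h0 := norm_eg_le hx0.le hx1 hxx ht
  have hiv : (0:ℝ) ≤ (Real.sqrt (1-t^2))⁻¹ := by positivity
  calc ‖eL x t‖ ≤ ‖x*(x^2-1) * eg2 x t‖ + ‖(3*x^2-1) * eg1 x t‖ + ‖x * eg x t‖ := by
        rw [eL]
        exact norm_add₃_le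
    _ = |x*(x^2-1)| * ‖eg2 x t‖ + |3*x^2-1| * ‖eg1 x t‖ + |x| * ‖eg x t‖ := by
        simp [abs_mul]
    _ ≤ |x*(x^2-1)| * (4 * ((Real.sqrt (1-x^2))^5)⁻¹ * (Real.sqrt (1-t^2))⁻¹)
        + |3*x^2-1| * (((Real.sqrt (1-x^2))^3)⁻¹ * (Real.sqrt (1-t^2))⁻¹)
        + |x| * ((Real.sqrt (1-x^2))⁻¹ * (Real.sqrt (1-t^2))⁻¹) := by
        gcongr
    _ = _ := by ring

lemma integral_eL {x : ℝ} (hx0 : 0 < x) (hx1 : x < 1) :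
    ∫ t in (0:ℝ)..1, eL x t = 0 := by
  have hcont : ContinuousOn (eh x) (Set.Icc 0 1) := by
    apply ContinuousOn.div
    · exact ((continuous_const.mul continuous_id).mul
        ((continuous_const.sub (continuous_pow 2)).sqrt)).continuousOn
    · exact (((continuous_const.sub (continuous_const.mul (continuous_pow 2))).sqrt).pow 3).continuousOn
    · intro t ht
      have h2 : (0:ℝ) < 1 - x^2*t^2 := by
        have ht2 : t^2 ≤ 1 := by nlinarith [ht.1, ht.2]
        nlinarith [mul_le_mul_of_nonneg_left ht2 (sq_nonneg x)]
      have := Real.sqrt_pos.2 h2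
      positivity
  have hEq := intervalIntegral.integral_eq_sub_of_hasDeriv_right_of_le (by norm_num : (0:ℝ) ≤ 1)
    hcont (fun t ht => (hasDerivAt_eh hx0 hx1 ht.1 ht.2).hasDerivWithinAt)
    (intervalIntegrable_eL hx0 hx1)
  rw [hEq]
  norm_num [eh]

theorem stmt19 (x : ℝ) (hx0 : 0 < x) (hx1 : x < 1) :
    x * (x^2 - 1) * iteratedDeriv 2 ellipticK x
      + (3 * x^2 - 1) * deriv ellipticK x
      + x * ellipticK x = 0 := by
  have hstep : ∀ y : ℝ, 0 < y → y < 1 →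
      (IntervalIntegrable (eg1 y) MeasureTheory.volume 0 1 ∧
        HasDerivAt (fun k => ∫ t in (0:ℝ)..1, eg k t) (∫ t in (0:ℝ)..1, eg1 y t) y) := by
    intro y hy0 hy1
    have hb0 : (0:ℝ) ≤ (1+y)/2 := by linarith
    have hb1 : (1+y)/2 < 1 := by linarith
    refine deriv_step hy0 hy1 eg eg1 meas_eg meas_eg1
      ((Real.sqrt (1-((1+y)/2)^2))⁻¹) (((Real.sqrt (1-((1+y)/2)^2))^3)⁻¹)
      (fun k hk t ht => norm_eg_le hb0 hb1 hk ht)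
      (fun k hk t ht => norm_eg1_le hb0 hb1 hk ht) ?_
    intro t ht k hk
    refine hasDerivAt_eg ht.1 ht.2 ?_
    have hk2 : k^2 ≤ ((1+y)/2)^2 := by
      have := pow_le_pow_left₀ (abs_nonneg k) hk 2
      simpa [sq_abs] using this
    have ht2 : t^2 < 1 := by nlinarith [ht.1, ht.2]
    nlinarith [sq_nonneg k, mul_le_mul_of_nonneg_right hk2 (sq_nonneg t)]
  have hstep2 :
      IntervalIntegrable (eg2 x) MeasureTheory.volume 0 1 ∧
        HasDerivAt (fun k => ∫ t in (0:ℝ)..1, eg1 k t) (∫ t in (0:ℝ)..1, eg2 x t) x := by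
    have hb0 : (0:ℝ) ≤ (1+x)/2 := by linarith
    have hb1 : (1+x)/2 < 1 := by linarith
    refine deriv_step hx0 hx1 eg1 eg2 meas_eg1 meas_eg2
      (((Real.sqrt (1-((1+x)/2)^2))^3)⁻¹) (4 * ((Real.sqrt (1-((1+x)/2)^2))^5)⁻¹)
      (fun k hk t ht => norm_eg1_le hb0 hb1 hk ht)
      (fun k hk t ht => norm_eg2_le hb0 hb1 hk ht) ?_
    intro t ht k hk
    refine hasDerivAt_eg1 ht.1 ht.2 ?_
    have hk2 : k^2 ≤ ((1+x)/2)^2 := by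
      have := pow_le_pow_left₀ (abs_nonneg k) hk 2
      simpa [sq_abs] using this
    have ht2 : t^2 < 1 := by nlinarith [ht.1, ht.2]
    nlinarith [sq_nonneg k, mul_le_mul_of_nonneg_right hk2 (sq_nonneg t)]
  have hKfun : ellipticK = fun k => ∫ t in (0:ℝ)..1, eg k t := by
    funext k
    simp only [ellipticK, eg]
  have hK1 : HasDerivAt ellipticK (∫ t in (0:ℝ)..1, eg1 x t) x := by
    rw [hKfun]; exact (hstep x hx0 hx1).2
  have hd1 : deriv ellipticK x = ∫ t in (0:ℝ)..1, eg1 x t := hK1.deriv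
  have hev : deriv ellipticK =ᶠ[nhds x] fun y => ∫ t in (0:ℝ)..1, eg1 y t := by
    filter_upwards [Ioo_mem_nhds hx0 hx1] with y hy
    have : HasDerivAt ellipticK (∫ t in (0:ℝ)..1, eg1 y t) y := by
      rw [hKfun]; exact (hstep y hy.1 hy.2).2
    exact this.deriv
  have h2 : iteratedDeriv 2 ellipticK x = ∫ t in (0:ℝ)..1, eg2 x t := by
    rw [iteratedDeriv_succ, iteratedDeriv_one, hev.deriv_eq]
    exact hstep2.2.deriv
  have hint_g : IntervalIntegrable (eg x) MeasureTheory.volume 0 1 := by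
    rw [intervalIntegrable_iff_integrableOn_Ioc_of_le (by norm_num)]
    exact integrableOn_of_bound (meas_eg x).aestronglyMeasurable
      (fun t ht => norm_eg_le hx0.le hx1 (by rw [abs_of_pos hx0]) ht)
  have lin : ∫ t in (0:ℝ)..1, eL x t
      = x*(x^2-1) * (∫ t in (0:ℝ)..1, eg2 x t)
        + (3*x^2-1) * (∫ t in (0:ℝ)..1, eg1 x t)
        + x * (∫ t in (0:ℝ)..1, eg x t) := by
    simp only [eL]
    rw [intervalIntegral.integral_add
        (((hstep2.1).const_mul _).add (((hstep x hx0 hx1).1).const_mul _))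
        (hint_g.const_mul _),
      intervalIntegral.integral_add ((hstep2.1).const_mul _)
        (((hstep x hx0 hx1).1).const_mul _),
      intervalIntegral.integral_const_mul, intervalIntegral.integral_const_mul,
      intervalIntegral.integral_const_mul]
  have hKx : ellipticK x = ∫ t in (0:ℝ)..1, eg x t := by
    simp only [ellipticK, eg]
  rw [h2, hd1, hKx]
  have := integral_eL hx0 hx1
  rw [lin] at this
  linarith [this]
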